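/- arXiv:1706.05289 — 5 statements merged into one kernel-verified Lean document; each statement's English description precedes it below -/
import Mathlib

section
/- For every k ∈ ℕ₀ and every x ∈ ℂ with |x| = 1, |P_k(x)| ≤ 2^{(k+1)/2} and |Q_k(x)| ≤ 2^{(k+1)/2}. -/
open Polynomial

/-- The pair of polynomial sequences `(P_k, Q_k)` defined by `P_0 = Q_0 = X` and
`P_{k+1} = P_k + σ_k x^{2^k} Q_k`, `Q_{k+1} = P_k - σ_k x^{2^k} Q_k`. -/
noncomputable def PQ (σ : ℕ → ℤ) : ℕ → Polynomial ℂ × Polynomial ℂ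
  | 0 => (Polynomial.X, Polynomial.X)
  | k + 1 =>
      ((PQ σ k).1 + Polynomial.C ((σ k : ℂ)) * Polynomial.X ^ 2 ^ k * (PQ σ k).2,
       (PQ σ k).1 - Polynomial.C ((σ k : ℂ)) * Polynomial.X ^ 2 ^ k * (PQ σ k).2)

lemma PQ_normSq (σ : ℕ → ℤ) (hσ : ∀ k, σ k = 1 ∨ σ k = -1) :
    ∀ k : ℕ, ∀ x : ℂ, ‖x‖ = 1 →
      Complex.normSq ((PQ σ k).1.eval x) + Complex.normSq ((PQ σ k).2.eval x)
        = 2 ^ (k + 1) := by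
  intro k
  induction k with
  | zero =>
      intro x hx
      simp [PQ, ← Complex.sq_norm, hx]
      norm_num
  | succ k ih =>
      intro x hx
      have h := ih x hx
      set p := (PQ σ k).1.eval x
      set q := (PQ σ k).2.eval x
      have hc : Complex.normSq ((σ k : ℂ) * x ^ 2 ^ k) = 1 := by
        have h1 : Complex.normSq ((σ k : ℂ)) = 1 := by
          rcases hσ k with h' | h' <;> simp [h', Complex.normSq]
        have h2 : Complex.normSq (x ^ 2 ^ k) = 1 := by
          rw [← Complex.sq_norm, norm_pow, hx, one_pow, one_pow]
        rw [Complex.normSq_mul, h1, h2, one_mul]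
      have heval1 : (PQ σ (k+1)).1.eval x = p + (σ k : ℂ) * x ^ 2 ^ k * q := by
        simp [PQ, p, q]
      have heval2 : (PQ σ (k+1)).2.eval x = p - (σ k : ℂ) * x ^ 2 ^ k * q := by
        simp [PQ, p, q]
      rw [heval1, heval2]
      set c := (σ k : ℂ) * x ^ 2 ^ k
      have key : Complex.normSq (p + c * q) + Complex.normSq (p - c * q)
          = 2 * (Complex.normSq p + Complex.normSq (c * q)) := by
        simp [Complex.normSq_add, Complex.normSq_sub]
        ring
      rw [key, Complex.normSq_mul, hc, one_mul, h]
      ring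

theorem stmt2 (σ : ℕ → ℤ) (hσ : ∀ k, σ k = 1 ∨ σ k = -1) :
    ∀ k : ℕ, ∀ x : ℂ, ‖x‖ = 1 →
      ‖(PQ σ k).1.eval x‖ ≤ (2 : ℝ) ^ (((k : ℝ) + 1) / 2) ∧
      ‖(PQ σ k).2.eval x‖ ≤ (2 : ℝ) ^ (((k : ℝ) + 1) / 2) := by
  intro k x hx
  have h := PQ_normSq σ hσ k x hx
  have hb : (2 : ℝ) ^ (((k : ℝ) + 1) / 2) = Real.sqrt (2 ^ (k + 1)) := by
    rw [Real.sqrt_eq_rpow, ← Real.rpow_natCast 2 (k + 1), ← Real.rpow_mul (by norm_num)]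
    push_cast
    ring_nf
  rw [hb]
  constructor
  · have h1 : Complex.normSq ((PQ σ k).1.eval x) ≤ 2 ^ (k + 1) := by
      nlinarith [Complex.normSq_nonneg ((PQ σ k).2.eval x)]
    calc ‖(PQ σ k).1.eval x‖
        = Real.sqrt (Complex.normSq ((PQ σ k).1.eval x)) := Complex.norm_def _
      _ ≤ Real.sqrt (2 ^ (k + 1)) := Real.sqrt_le_sqrt h1
  · have h1 : Complex.normSq ((PQ σ k).2.eval x) ≤ 2 ^ (k + 1) := by
      nlinarith [Complex.normSq_nonneg ((PQ σ k).1.eval x)]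
    calc ‖(PQ σ k).2.eval x‖
        = Real.sqrt (Complex.normSq ((PQ σ k).2.eval x)) := Complex.norm_def _
      _ ≤ Real.sqrt (2 ^ (k + 1)) := Real.sqrt_le_sqrt h1
end

section
/- Write P_k(x) = Σ_{n=1}^{2^k} ε_n x^n and Q_k(x) = Σ_{n=1}^{2^k} γ_n x^n with ε_n, γ_n ∈ {1, −1}. Then for every k ∈ ℕ₀, every m with 1 ≤ m ≤ 2^k, and every x ∈ ℂ with |x| = 1, |Σ_{n=1}^m ε_n x^n| ≤ (2 + √2)·2^{k/2} and |Σ_{n=1}^m γ_n x^n| ≤ (2 + √2)·2^{k/2}. -/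
open Polynomial Finset

lemma coeff_term (a : ℂ) (p : ℕ) (Q : Polynomial ℂ) (n : ℕ) :
    (Polynomial.C a * Polynomial.X ^ p * Q).coeff n
      = if p ≤ n then a * Q.coeff (n - p) else 0 := by
  rw [mul_assoc, mul_comm (Polynomial.X ^ p), ← mul_assoc, Polynomial.coeff_mul_X_pow']
  split <;> simp [Polynomial.coeff_C_mul]

lemma PQ_coeff_zero (σ : ℕ → ℤ) (k : ℕ) :
    (PQ σ k).1.coeff 0 = 0 ∧ (PQ σ k).2.coeff 0 = 0 := by
  induction k with
  | zero => simp [PQ]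
  | succ k ih =>
    have hp : ¬ (2 ^ k ≤ 0) := by have : 0 < 2 ^ k := by positivity
                                  omega
    simp only [PQ, Polynomial.coeff_add, Polynomial.coeff_sub, coeff_term, if_neg hp, ih.1]
    simp

lemma PQ_coeff_high (σ : ℕ → ℤ) (k : ℕ) : ∀ n, 2 ^ k < n →
    (PQ σ k).1.coeff n = 0 ∧ (PQ σ k).2.coeff n = 0 := by
  induction k with
  | zero => intro n hn; simp [PQ, Polynomial.coeff_X]; omega
  | succ k ih =>
    intro n hn
    have h1 : 2 ^ k < n := by
      have : (2:ℕ) ^ k ≤ 2 ^ (k+1) := Nat.pow_le_pow_right (by norm_num) (by omega)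
      omega
    have h2 : 2 ^ k < n - 2 ^ k := by
      have : 2 ^ (k+1) = 2 ^ k + 2 ^ k := by ring
      omega
    simp only [PQ, Polynomial.coeff_add, Polynomial.coeff_sub, coeff_term,
      (ih n h1).1, (ih _ h2).2]
    simp

lemma PQ_coeff_low (σ : ℕ → ℤ) (k : ℕ) : ∀ n, n ≤ 2 ^ k →
    (PQ σ (k+1)).1.coeff n = (PQ σ k).1.coeff n ∧
    (PQ σ (k+1)).2.coeff n = (PQ σ k).1.coeff n := by
  intro n hn
  have h : (Polynomial.C ((σ k : ℂ)) * Polynomial.X ^ 2 ^ k * (PQ σ k).2).coeff n = 0 := by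
    rw [coeff_term]
    split
    · have : n = 2 ^ k := by omega
      simp [this, (PQ_coeff_zero σ k).2]
    · rfl
  simp only [PQ, Polynomial.coeff_add, Polynomial.coeff_sub, h]
  simp

lemma shift_sum (p m : ℕ) (hpm : p ≤ m) (f : ℕ → ℂ) :
    ∑ n ∈ Icc (p+1) m, f n = ∑ j ∈ Icc 1 (m - p), f (p + j) := by
  rw [← Finset.Ico_add_one_right_eq_Icc, ← Finset.Ico_add_one_right_eq_Icc, Finset.sum_Ico_eq_sum_range,
      Finset.sum_Ico_eq_sum_range]
  have h : m + 1 - (p+1) = m - p + 1 - 1 := by omega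
  rw [h]
  exact Finset.sum_congr rfl fun i _ => by congr 1; omega

lemma splitS (σ : ℕ → ℤ) (k m : ℕ) (h1 : 2 ^ k ≤ m) (x : ℂ) :
    (∑ n ∈ Icc 1 m, (PQ σ (k+1)).1.coeff n * x ^ n
      = (∑ n ∈ Icc 1 (2^k), (PQ σ k).1.coeff n * x ^ n)
        + (σ k : ℂ) * x ^ (2^k) * ∑ n ∈ Icc 1 (m - 2^k), (PQ σ k).2.coeff n * x ^ n)
    ∧ (∑ n ∈ Icc 1 m, (PQ σ (k+1)).2.coeff n * x ^ n
      = (∑ n ∈ Icc 1 (2^k), (PQ σ k).1.coeff n * x ^ n)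
        - (σ k : ℂ) * x ^ (2^k) * ∑ n ∈ Icc 1 (m - 2^k), (PQ σ k).2.coeff n * x ^ n) := by
  set p := 2 ^ k with hp
  have hA : ∑ n ∈ Icc 1 m, (PQ σ k).1.coeff n * x ^ n
      = ∑ n ∈ Icc 1 p, (PQ σ k).1.coeff n * x ^ n := by
    refine (Finset.sum_subset (Finset.Icc_subset_Icc_right h1) ?_).symm
    intro n hn hn'
    have : p < n := by
      simp only [Finset.mem_Icc] at hn hn'
      omega
    rw [(PQ_coeff_high σ k n this).1, zero_mul]
  have hB : ∑ n ∈ Icc 1 m, (Polynomial.C ((σ k : ℂ)) * Polynomial.X ^ p * (PQ σ k).2).coeff n * x ^ n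
      = (σ k : ℂ) * x ^ p * ∑ n ∈ Icc 1 (m - p), (PQ σ k).2.coeff n * x ^ n := by
    rw [← Finset.sum_subset (Finset.Icc_subset_Icc_left (Nat.le_add_left 1 p)) ?side]
    · rw [shift_sum p m h1, Finset.mul_sum]
      refine Finset.sum_congr rfl fun j hj => ?_
      rw [coeff_term, if_pos (by omega), Nat.add_sub_cancel_left, pow_add]
      ring
    · intro n hn hn'
      simp only [Finset.mem_Icc] at hn hn'
      rw [coeff_term]
      rcases Nat.lt_or_ge n p with h | h
      · rw [if_neg (by omega), zero_mul]
      · have : n = p := by omega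
        rw [if_pos h, this, Nat.sub_self, (PQ_coeff_zero σ k).2, mul_zero, zero_mul]
  constructor
  · calc ∑ n ∈ Icc 1 m, (PQ σ (k+1)).1.coeff n * x ^ n
        = ∑ n ∈ Icc 1 m, ((PQ σ k).1.coeff n * x ^ n
            + (Polynomial.C ((σ k : ℂ)) * Polynomial.X ^ p * (PQ σ k).2).coeff n * x ^ n) := by
          refine Finset.sum_congr rfl fun n _ => ?_
          simp only [PQ, Polynomial.coeff_add]; ring
      _ = _ := by rw [Finset.sum_add_distrib, hA, hB]
  · calc ∑ n ∈ Icc 1 m, (PQ σ (k+1)).2.coeff n * x ^ n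
        = ∑ n ∈ Icc 1 m, ((PQ σ k).1.coeff n * x ^ n
            - (Polynomial.C ((σ k : ℂ)) * Polynomial.X ^ p * (PQ σ k).2).coeff n * x ^ n) := by
          refine Finset.sum_congr rfl fun n _ => ?_
          simp only [PQ, Polynomial.coeff_sub]; ring
      _ = _ := by rw [Finset.sum_sub_distrib, hA, hB]

lemma rhalf (k : ℕ) : Real.sqrt ((2:ℝ)^(k+1)) = Real.sqrt 2 * (2:ℝ)^((k:ℝ)/2) := by
  rw [Real.sqrt_eq_rpow, Real.sqrt_eq_rpow, ← Real.rpow_natCast (2:ℝ) (k+1),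
      ← Real.rpow_mul (by norm_num : (0:ℝ) ≤ 2), ← Real.rpow_add (by norm_num : (0:ℝ) < 2)]
  congr 1
  push_cast
  ring

lemma rhalf2 (k : ℕ) : (2:ℝ)^((((k+1):ℕ):ℝ)/2) = Real.sqrt 2 * (2:ℝ)^((k:ℝ)/2) := by
  rw [Real.sqrt_eq_rpow, ← Real.rpow_add (by norm_num : (0:ℝ) < 2)]
  congr 1
  push_cast
  ring

lemma abs_sigma (σ : ℕ → ℤ) (hσ : ∀ k, σ k = 1 ∨ σ k = -1) (k : ℕ) :
    ‖(σ k : ℂ)‖ = 1 := by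
  rcases hσ k with h | h <;> simp [h]

lemma para (a b : ℂ) : ‖a + b‖ ^ 2 + ‖a - b‖ ^ 2
    = 2 * (‖a‖ ^ 2 + ‖b‖ ^ 2) := by
  simpa [sq] using parallelogram_law_with_norm ℂ a b

lemma PQ_sq (σ : ℕ → ℤ) (hσ : ∀ k, σ k = 1 ∨ σ k = -1) (k : ℕ) (x : ℂ)
    (hx : ‖x‖ = 1) :
    ‖∑ n ∈ Icc 1 (2^k), (PQ σ k).1.coeff n * x ^ n‖ ^ 2
      + ‖∑ n ∈ Icc 1 (2^k), (PQ σ k).2.coeff n * x ^ n‖ ^ 2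
      = 2 ^ (k+1) := by
  induction k with
  | zero =>
    simp [PQ, Polynomial.coeff_X, hx]
    norm_num [hx]
  | succ k ih =>
    have h1 : 2 ^ k ≤ 2 ^ (k+1) := Nat.pow_le_pow_right (by norm_num) (by omega)
    have h2 : 2 ^ (k+1) - 2 ^ k = 2 ^ k := by
      have : 2 ^ (k+1) = 2 ^ k + 2 ^ k := by ring
      omega
    obtain ⟨e1, e2⟩ := splitS σ k (2^(k+1)) h1 x
    rw [h2] at e1 e2
    rw [e1, e2, para]
    have hw : ‖(σ k : ℂ) * x ^ 2 ^ k
        * ∑ n ∈ Icc 1 (2^k), (PQ σ k).2.coeff n * x ^ n‖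
        = ‖∑ n ∈ Icc 1 (2^k), (PQ σ k).2.coeff n * x ^ n‖ := by
      rw [norm_mul, norm_mul, abs_sigma σ hσ, norm_pow, hx]
      ring
    rw [hw, ih]
    ring

lemma PQ_full_bound (σ : ℕ → ℤ) (hσ : ∀ k, σ k = 1 ∨ σ k = -1) (k : ℕ) (x : ℂ)
    (hx : ‖x‖ = 1) :
    ‖∑ n ∈ Icc 1 (2^k), (PQ σ k).1.coeff n * x ^ n‖
      ≤ Real.sqrt 2 * (2:ℝ)^((k:ℝ)/2) := by
  have hsq := PQ_sq σ hσ k x hx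
  rw [← rhalf]
  rw [show ‖∑ n ∈ Icc 1 (2^k), (PQ σ k).1.coeff n * x ^ n‖
      = Real.sqrt (‖∑ n ∈ Icc 1 (2^k), (PQ σ k).1.coeff n * x ^ n‖ ^ 2) by
    rw [Real.sqrt_sq (norm_nonneg _)]]
  apply Real.sqrt_le_sqrt
  nlinarith [sq_nonneg (‖∑ n ∈ Icc 1 (2^k), (PQ σ k).2.coeff n * x ^ n‖)]

/-- Partial sums of the coefficient sequences of `P_k` and `Q_k` are bounded by
`(2 + √2) · 2^{k/2}` on the unit circle. -/
theorem stmt3 (σ : ℕ → ℤ) (hσ : ∀ k, σ k = 1 ∨ σ k = -1) :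
    ∀ k : ℕ, ∀ m : ℕ, 1 ≤ m → m ≤ 2 ^ k → ∀ x : ℂ, ‖x‖ = 1 →
      ‖∑ n ∈ Finset.Icc 1 m, (PQ σ k).1.coeff n * x ^ n‖
        ≤ (2 + Real.sqrt 2) * (2 : ℝ) ^ ((k : ℝ) / 2) ∧
      ‖∑ n ∈ Finset.Icc 1 m, (PQ σ k).2.coeff n * x ^ n‖
        ≤ (2 + Real.sqrt 2) * (2 : ℝ) ^ ((k : ℝ) / 2) := by
  intro k
  induction k with
  | zero =>
    intro m hm1 hm2 x hx
    have hm : m = 1 := le_antisymm (by simpa using hm2) hm1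
    subst hm
    have hs : (1:ℝ) ≤ 2 + Real.sqrt 2 := by
      have := Real.sqrt_nonneg 2; linarith
    constructor <;>
      simpa [PQ, Polynomial.coeff_X, hx] using hs
  | succ k ih =>
    intro m hm1 hm2 x hx
    have hs0 : (0:ℝ) ≤ Real.sqrt 2 := Real.sqrt_nonneg 2
    have hC : (0:ℝ) ≤ 2 + Real.sqrt 2 := by linarith
    rcases le_or_gt m (2^k) with h | h
    · -- low case
      have eP : ∑ n ∈ Icc 1 m, (PQ σ (k+1)).1.coeff n * x ^ n
          = ∑ n ∈ Icc 1 m, (PQ σ k).1.coeff n * x ^ n :=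
        Finset.sum_congr rfl fun n hn => by
          rw [(PQ_coeff_low σ k n (le_trans (Finset.mem_Icc.mp hn).2 h)).1]
      have eQ : ∑ n ∈ Icc 1 m, (PQ σ (k+1)).2.coeff n * x ^ n
          = ∑ n ∈ Icc 1 m, (PQ σ k).1.coeff n * x ^ n :=
        Finset.sum_congr rfl fun n hn => by
          rw [(PQ_coeff_low σ k n (le_trans (Finset.mem_Icc.mp hn).2 h)).2]
      have hb := (ih m hm1 h x hx).1
      have hmono : (2:ℝ)^((k:ℝ)/2) ≤ (2:ℝ)^((((k+1):ℕ):ℝ)/2) := by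
        apply Real.rpow_le_rpow_of_exponent_le one_le_two
        push_cast
        linarith
      have : ‖∑ n ∈ Icc 1 m, (PQ σ k).1.coeff n * x ^ n‖
          ≤ (2 + Real.sqrt 2) * (2:ℝ)^((((k+1):ℕ):ℝ)/2) :=
        le_trans hb (mul_le_mul_of_nonneg_left hmono hC)
      exact ⟨by rw [eP]; exact this, by rw [eQ]; exact this⟩
    · -- high case
      obtain ⟨e1, e2⟩ := splitS σ k m h.le x
      have hm' : m - 2^k ≤ 2^k := by
        have : 2 ^ (k+1) = 2 ^ k + 2 ^ k := by ring
        omega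
      have hm'1 : 1 ≤ m - 2^k := by omega
      have hb := (ih (m - 2^k) hm'1 hm' x hx).2
      have ha := PQ_full_bound σ hσ k x hx
      have hw : ‖(σ k : ℂ) * x ^ 2 ^ k
          * ∑ n ∈ Icc 1 (m - 2^k), (PQ σ k).2.coeff n * x ^ n‖
          = ‖∑ n ∈ Icc 1 (m - 2^k), (PQ σ k).2.coeff n * x ^ n‖ := by
        rw [norm_mul, norm_mul, abs_sigma σ hσ, norm_pow, hx]
        ring
      have key : Real.sqrt 2 * (2:ℝ)^((k:ℝ)/2) + (2 + Real.sqrt 2) * (2:ℝ)^((k:ℝ)/2)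
          = (2 + Real.sqrt 2) * (2:ℝ)^((((k+1):ℕ):ℝ)/2) := by
        rw [rhalf2]
        have h2 : Real.sqrt 2 * Real.sqrt 2 = 2 := Real.mul_self_sqrt (by norm_num)
        linear_combination (-(2:ℝ)^((k:ℝ)/2)) * h2
      constructor
      · rw [e1]
        calc ‖_‖ ≤ ‖∑ n ∈ Icc 1 (2^k), (PQ σ k).1.coeff n * x ^ n‖
              + ‖(σ k : ℂ) * x ^ 2 ^ k
                * ∑ n ∈ Icc 1 (m - 2^k), (PQ σ k).2.coeff n * x ^ n‖ :=
            norm_add_le _ _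
          _ ≤ Real.sqrt 2 * (2:ℝ)^((k:ℝ)/2) + (2 + Real.sqrt 2) * (2:ℝ)^((k:ℝ)/2) := by
            rw [hw]; exact add_le_add ha hb
          _ = _ := key
      · rw [e2, sub_eq_add_neg]
        calc ‖_‖ ≤ ‖∑ n ∈ Icc 1 (2^k), (PQ σ k).1.coeff n * x ^ n‖
              + ‖-((σ k : ℂ) * x ^ 2 ^ k
                * ∑ n ∈ Icc 1 (m - 2^k), (PQ σ k).2.coeff n * x ^ n)‖ :=
            norm_add_le _ _
          _ ≤ Real.sqrt 2 * (2:ℝ)^((k:ℝ)/2) + (2 + Real.sqrt 2) * (2:ℝ)^((k:ℝ)/2) := by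
            rw [norm_neg, hw]; exact add_le_add ha hb
          _ = _ := key
end

section
/- For every k ∈ ℕ₀, the word a_k = ε_1 ε_2 ⋯ ε_{2^k} ∈ {±1}^{2^k} of coefficients of P_k satisfies a_k = φ((S_{σ_0} ∘ S_{σ_1} ∘ ⋯ ∘ S_{σ_{k−1}})(A)), where S_σ denotes S₊ if σ = 1 and S₋ if σ = −1. -/
open Polynomial

/-- The four-letter alphabet `{A, B, Ā, B̄}`. -/
inductive Letter : Type
  | A | B | Abar | Bbar
  deriving DecidableEq, Repr

/-- The substitution `S₊ : A ↦ AB, B ↦ AB̄, Ā ↦ ĀB̄, B̄ ↦ ĀB`. -/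
def Splus : Letter → List Letter
  | .A => [.A, .B]
  | .B => [.A, .Bbar]
  | .Abar => [.Abar, .Bbar]
  | .Bbar => [.Abar, .B]

/-- The substitution `S₋ : A ↦ AB̄, B ↦ AB, Ā ↦ ĀB, B̄ ↦ ĀB̄`. -/
def Sminus : Letter → List Letter
  | .A => [.A, .Bbar]
  | .B => [.A, .B]
  | .Abar => [.Abar, .B]
  | .Bbar => [.Abar, .Bbar]

/-- `S_σ` is `S₊` if `σ = 1` and `S₋` otherwise (in particular if `σ = -1`). -/
def Ssign (s : ℤ) : Letter → List Letter :=
  if s = 1 then Splus else Sminus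

/-- `comp σ k u = (S_{σ_0} ∘ S_{σ_1} ∘ ⋯ ∘ S_{σ_{k-1}})(u)`. -/
def comp (σ : ℕ → ℤ) : ℕ → List Letter → List Letter
  | 0, u => u
  | k + 1, u => comp σ k (u.flatMap (Ssign (σ k)))

/-- The factor map `φ : A, B ↦ 1`, `Ā, B̄ ↦ -1`. -/
def phi : Letter → ℂ
  | .A => 1
  | .B => 1
  | .Abar => -1
  | .Bbar => -1

lemma coeff_sigma_term (s : ℂ) (q : Polynomial ℂ) (m n : ℕ) :
    (C s * X ^ m * q).coeff n = s * (if m ≤ n then q.coeff (n - m) else 0) := by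
  rw [mul_assoc, coeff_C_mul, X_pow_mul, coeff_mul_X_pow']

lemma PQ_zero (σ : ℕ → ℤ) : ∀ k, (PQ σ k).1.coeff 0 = 0 ∧ (PQ σ k).2.coeff 0 = 0 := by
  intro k
  induction k with
  | zero => simp [PQ]
  | succ k ih =>
    have h0 : ¬ (2 ^ k ≤ 0) := by
      have : 0 < 2 ^ k := Nat.pow_pos (by norm_num)
      omega
    simp only [PQ, coeff_add, coeff_sub, coeff_sigma_term, h0, if_false, mul_zero, add_zero, sub_zero, ih.1, and_self]

lemma PQ_high (σ : ℕ → ℤ) : ∀ k n, 2 ^ k < n →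
    (PQ σ k).1.coeff n = 0 ∧ (PQ σ k).2.coeff n = 0 := by
  intro k
  induction k with
  | zero =>
    intro n hn
    have : n ≠ 1 := by simpa using hn.ne'
    simp [PQ, coeff_X, Ne.symm this]
  | succ k ih =>
    intro n hn
    have h2 : 2 ^ (k+1) = 2 ^ k + 2 ^ k := by ring
    have hP := (ih n (by omega)).1
    have hQ := (ih (n - 2 ^ k) (by omega)).2
    have hle : 2 ^ k ≤ n := by omega
    simp only [PQ, coeff_add, coeff_sub, coeff_sigma_term, hP, hQ, hle, if_true, mul_zero, add_zero, zero_add, sub_zero, and_self]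

lemma PQ_low (σ : ℕ → ℤ) (k i : ℕ) (hi : i < 2 ^ k) :
    (PQ σ (k+1)).1.coeff (i+1) = (PQ σ k).1.coeff (i+1) ∧
    (PQ σ (k+1)).2.coeff (i+1) = (PQ σ k).1.coeff (i+1) := by
  have hterm : (C ((σ k : ℂ)) * X ^ 2 ^ k * (PQ σ k).2).coeff (i+1) = 0 := by
    rw [coeff_sigma_term]
    by_cases h : 2 ^ k ≤ i + 1
    · have hs : i + 1 - 2 ^ k = 0 := by omega
      simp [h, hs, (PQ_zero σ k).2]
    · simp [h]
  simp only [PQ, coeff_add, coeff_sub, hterm, add_zero, sub_zero, and_self]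

lemma PQ_highc (σ : ℕ → ℤ) (k i : ℕ) :
    (PQ σ (k+1)).1.coeff (2 ^ k + i + 1) = (σ k : ℂ) * (PQ σ k).2.coeff (i+1) ∧
    (PQ σ (k+1)).2.coeff (2 ^ k + i + 1) = -((σ k : ℂ) * (PQ σ k).2.coeff (i+1)) := by
  have hP := (PQ_high σ k (2 ^ k + i + 1) (by omega)).1
  have hle : 2 ^ k ≤ 2 ^ k + i + 1 := by omega
  have hsub : 2 ^ k + i + 1 - 2 ^ k = i + 1 := by omega
  simp only [PQ, coeff_add, coeff_sub, coeff_sigma_term, hle, hsub, if_true, hP, zero_add, zero_sub, and_self]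

lemma range_split_gen (f g h : ℕ → ℂ) (m : ℕ)
    (hlow : ∀ i < m, f i = g i) (hhigh : ∀ i < m, f (m + i) = h i) :
    (List.range (m + m)).map f = (List.range m).map g ++ (List.range m).map h := by
  rw [List.range_add, List.map_append, List.map_map]
  congr 1
  · exact List.map_congr_left (fun i hi => hlow i (List.mem_range.mp hi))
  · exact List.map_congr_left (fun i hi => hhigh i (List.mem_range.mp hi))

lemma comp_append (σ : ℕ → ℤ) : ∀ k u v, comp σ k (u ++ v) = comp σ k u ++ comp σ k v := by
  intro k
  induction k with
  | zero => intro u v; rfl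
  | succ k ih =>
    intro u v
    show comp σ k ((u ++ v).flatMap (Ssign (σ k)))
        = comp σ k (u.flatMap (Ssign (σ k))) ++ comp σ k (v.flatMap (Ssign (σ k)))
    rw [List.flatMap_append, ih]

lemma comp_succ_singleton (σ : ℕ → ℤ) (k : ℕ) (l : Letter) :
    comp σ (k+1) [l] = comp σ k (Ssign (σ k) l) := by
  show comp σ k ([l].flatMap (Ssign (σ k))) = comp σ k (Ssign (σ k) l)
  simp only [List.flatMap_cons, List.flatMap_nil, List.append_nil]

lemma main_aux (σ : ℕ → ℤ) (hσ : ∀ k, σ k = 1 ∨ σ k = -1) : ∀ k,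
    ((comp σ k [Letter.A]).map phi
        = (List.range (2^k)).map fun i => (PQ σ k).1.coeff (i+1)) ∧
    ((comp σ k [Letter.B]).map phi
        = (List.range (2^k)).map fun i => (PQ σ k).2.coeff (i+1)) ∧
    ((comp σ k [Letter.Abar]).map phi
        = (List.range (2^k)).map fun i => -(PQ σ k).1.coeff (i+1)) ∧
    ((comp σ k [Letter.Bbar]).map phi
        = (List.range (2^k)).map fun i => -(PQ σ k).2.coeff (i+1)) := by
  intro k
  induction k with
  | zero =>
    have h0 : ∀ u, comp σ 0 u = u := fun u => rfl
    have hr : List.range 1 = [0] := rfl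
    simp [h0, PQ, phi, hr, coeff_X_one]
  | succ k ih =>
    obtain ⟨hA, hB, hAb, hBb⟩ := ih
    have h2 : 2 ^ (k+1) = 2 ^ k + 2 ^ k := by ring
    have hsplitP : (List.range (2^(k+1))).map (fun i => (PQ σ (k+1)).1.coeff (i+1))
        = ((List.range (2^k)).map fun i => (PQ σ k).1.coeff (i+1))
          ++ ((List.range (2^k)).map fun i => (σ k : ℂ) * (PQ σ k).2.coeff (i+1)) := by
      rw [h2]
      exact range_split_gen _ _ _ _ (fun i hi => (PQ_low σ k i hi).1)
        (fun i _ => (PQ_highc σ k i).1)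
    have hsplitQ : (List.range (2^(k+1))).map (fun i => (PQ σ (k+1)).2.coeff (i+1))
        = ((List.range (2^k)).map fun i => (PQ σ k).1.coeff (i+1))
          ++ ((List.range (2^k)).map fun i => -((σ k : ℂ) * (PQ σ k).2.coeff (i+1))) := by
      rw [h2]
      exact range_split_gen _ _ _ _ (fun i hi => (PQ_low σ k i hi).2)
        (fun i _ => (PQ_highc σ k i).2)
    have hsplitPn : (List.range (2^(k+1))).map (fun i => -(PQ σ (k+1)).1.coeff (i+1))
        = ((List.range (2^k)).map fun i => -(PQ σ k).1.coeff (i+1))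
          ++ ((List.range (2^k)).map fun i => -((σ k : ℂ) * (PQ σ k).2.coeff (i+1))) := by
      rw [h2]
      exact range_split_gen _ _ _ _ (fun i hi => by rw [(PQ_low σ k i hi).1])
        (fun i _ => by rw [(PQ_highc σ k i).1])
    have hsplitQn : (List.range (2^(k+1))).map (fun i => -(PQ σ (k+1)).2.coeff (i+1))
        = ((List.range (2^k)).map fun i => -(PQ σ k).1.coeff (i+1))
          ++ ((List.range (2^k)).map fun i => (σ k : ℂ) * (PQ σ k).2.coeff (i+1)) := by
      rw [h2]
      exact range_split_gen _ _ _ _ (fun i hi => by rw [(PQ_low σ k i hi).2])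
        (fun i _ => by rw [(PQ_highc σ k i).2, neg_neg])
    rcases hσ k with h1 | h1
    · have hs : Ssign (σ k) = Splus := by rw [h1]; rfl
      have hc : ((σ k : ℂ)) = 1 := by rw [h1]; norm_num
      simp only [hc, one_mul] at hsplitP hsplitQ hsplitPn hsplitQn
      refine ⟨?_, ?_, ?_, ?_⟩ <;>
        rw [comp_succ_singleton, hs]
      · rw [show (Splus Letter.A = [Letter.A] ++ [Letter.B]) from rfl,
          comp_append, List.map_append, hA, hB]
        exact hsplitP.symm
      · rw [show (Splus Letter.B = [Letter.A] ++ [Letter.Bbar]) from rfl,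
          comp_append, List.map_append, hA, hBb]
        exact hsplitQ.symm
      · rw [show (Splus Letter.Abar = [Letter.Abar] ++ [Letter.Bbar]) from rfl,
          comp_append, List.map_append, hAb, hBb]
        exact hsplitPn.symm
      · rw [show (Splus Letter.Bbar = [Letter.Abar] ++ [Letter.B]) from rfl,
          comp_append, List.map_append, hAb, hB]
        exact hsplitQn.symm
    · have hs : Ssign (σ k) = Sminus := by rw [h1]; rfl
      have hc : ((σ k : ℂ)) = -1 := by rw [h1]; norm_num
      simp only [hc, neg_one_mul, neg_neg] at hsplitP hsplitQ hsplitPn hsplitQn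
      refine ⟨?_, ?_, ?_, ?_⟩ <;>
        rw [comp_succ_singleton, hs]
      · rw [show (Sminus Letter.A = [Letter.A] ++ [Letter.Bbar]) from rfl,
          comp_append, List.map_append, hA, hBb]
        exact hsplitP.symm
      · rw [show (Sminus Letter.B = [Letter.A] ++ [Letter.B]) from rfl,
          comp_append, List.map_append, hA, hB]
        exact hsplitQ.symm
      · rw [show (Sminus Letter.Abar = [Letter.Abar] ++ [Letter.B]) from rfl,
          comp_append, List.map_append, hAb, hB]
        exact hsplitPn.symm
      · rw [show (Sminus Letter.Bbar = [Letter.Abar] ++ [Letter.Bbar]) from rfl,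
          comp_append, List.map_append, hAb, hBb]
        exact hsplitQn.symm

/-- The word `a_k = ε_1 ⋯ ε_{2^k}` of coefficients of `P_k` equals
`φ((S_{σ_0} ∘ ⋯ ∘ S_{σ_{k-1}})(A))` (letterwise). -/
theorem stmt8 (σ : ℕ → ℤ) (hσ : ∀ k, σ k = 1 ∨ σ k = -1) :
    ∀ k : ℕ,
      (comp σ k [Letter.A]).map phi
        = (List.range (2 ^ k)).map (fun i => (PQ σ k).1.coeff (i + 1)) := by
  intro k
  exact (main_aux σ hσ k).1
end

section
/- Let w₋₊, w₊₋ : ℕ → 𝒜 satisfy w₋₊(0) = w₊₋(0) = A, S₋₊·w₋₊ = w₋₊ and S₊₋·w₊₋ = w₊₋. Equip 𝒜^ℕ with the product topology (𝒜 discrete), and let X₋₊ and X₊₋ be the closures of the orbits {Tⁿ w₋₊ : n ∈ ℕ} and {Tⁿ w₊₋ : n ∈ ℕ} under the shift T. Then X₊₋ = S₊·X₋₊ ∪ T(S₊·X₋₊) and X₋₊ = S₋·X₊₋ ∪ T(S₋·X₊₋), where S₊·X (resp. S₋·X) denotes the image of X under the action of S₊ (resp. S₋) on sequences. -/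
instance : TopologicalSpace Letter := ⊥
instance : DiscreteTopology Letter := ⟨rfl⟩

/-- The substitution `S₋₊ : A ↦ AB̄AB, B ↦ AB̄ĀB̄, Ā ↦ ĀBĀB̄, B̄ ↦ ĀBAB`. -/
def Sminusplus : Letter → List Letter
  | .A => [.A, .Bbar, .A, .B]
  | .B => [.A, .Bbar, .Abar, .Bbar]
  | .Abar => [.Abar, .B, .Abar, .Bbar]
  | .Bbar => [.Abar, .B, .A, .B]

/-- The substitution `S₊₋ : A ↦ ABĀB, B ↦ ABAB̄, Ā ↦ ĀB̄AB̄, B̄ ↦ ĀB̄ĀB`. -/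
def Splusminus : Letter → List Letter
  | .A => [.A, .B, .Abar, .B]
  | .B => [.A, .B, .A, .Bbar]
  | .Abar => [.Abar, .Bbar, .A, .Bbar]
  | .Bbar => [.Abar, .Bbar, .Abar, .B]

/-- The action of a constant-length-`L` substitution `S` on one-sided infinite
sequences: `(S·w)(Ln + r)` is the `r`-th letter of `S(w(n))` for `0 ≤ r < L`. -/
def act (L : ℕ) (S : Letter → List Letter) (w : ℕ → Letter) : ℕ → Letter :=
  fun m => (S (w (m / L))).getD (m % L) Letter.A

/-- The shift map `T` on one-sided infinite sequences. -/
def shift (w : ℕ → Letter) : ℕ → Letter := fun n => w (n + 1)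

instance : Fintype Letter where
  elems := ⟨↑[Letter.A, .B, .Abar, .Bbar], by decide⟩
  complete := fun x => by cases x <;> decide

lemma shift_iter (n : ℕ) (w : ℕ → Letter) (k : ℕ) : shift^[n] w k = w (k + n) := by
  induction n generalizing w k with
  | zero => rfl
  | succ n ih =>
    rw [Function.iterate_succ_apply, ih]
    simp [shift, Nat.add_assoc]

lemma act_shift (L : ℕ) (hL : 0 < L) (S : Letter → List Letter) (w : ℕ → Letter) :
    act L S (shift w) = shift^[L] (act L S w) := by
  funext m
  rw [shift_iter]
  simp only [act, shift]
  rw [Nat.add_div_right m hL, Nat.add_mod_right]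

lemma act_shift_iter (L : ℕ) (hL : 0 < L) (S : Letter → List Letter) (n : ℕ)
    (w : ℕ → Letter) : act L S (shift^[n] w) = shift^[L * n] (act L S w) := by
  induction n generalizing w with
  | zero => simp
  | succ n ih =>
    rw [Function.iterate_succ_apply, ih, act_shift L hL,
      ← Function.iterate_add_apply]
    ring_nf

lemma continuous_act (L : ℕ) (S : Letter → List Letter) : Continuous (act L S) :=
  continuous_pi fun m =>
    (continuous_of_discreteTopology
      (f := fun a : Letter => (S a).getD (m % L) Letter.A)).comp (continuous_apply (m / L))

lemma continuous_shift : Continuous shift :=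
  continuous_pi fun n => continuous_apply (n + 1)

lemma fix_unique (S : Letter → List Letter) (u v : ℕ → Letter)
    (hu : act 4 S u = u) (hv : act 4 S v = v) (h0 : u 0 = v 0) : u = v := by
  funext m
  induction m using Nat.strong_induction_on with
  | _ m ih =>
    rcases Nat.eq_zero_or_pos m with rfl | hm
    · exact h0
    · have h4 : m / 4 < m := Nat.div_lt_self hm (by norm_num)
      conv_lhs => rw [← hu]
      conv_rhs => rw [← hv]
      simp only [act]
      rw [ih _ h4]

lemma inter (S2 S4a S4b : Letter → List Letter)
    (key : ∀ a : Letter, ∀ s < 8,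
      (S4b ((S2 a).getD (s / 4) Letter.A)).getD (s % 4) Letter.A =
      (S2 ((S4a a).getD (s / 2) Letter.A)).getD (s % 2) Letter.A)
    (w : ℕ → Letter) : act 4 S4b (act 2 S2 w) = act 2 S2 (act 4 S4a w) := by
  funext m
  have e1 : m / 4 / 2 = m / 8 := by omega
  have e2 : m / 4 % 2 = m % 8 / 4 := by omega
  have e3 : m % 4 = m % 8 % 4 := by omega
  have e4 : m / 2 / 4 = m / 8 := by omega
  have e5 : m / 2 % 4 = m % 8 / 2 := by omega
  have e6 : m % 2 = m % 8 % 2 := by omega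
  simp only [act]
  rw [e1, e2, e3, e4, e5, e6]
  exact key (w (m / 8)) (m % 8) (Nat.mod_lt _ (by norm_num))

lemma hull (S : Letter → List Letter) (w u : ℕ → Letter) (hu : act 2 S w = u) :
    closure {v | ∃ n : ℕ, v = shift^[n] u} =
      act 2 S '' closure {v | ∃ n : ℕ, v = shift^[n] w} ∪
      shift '' (act 2 S '' closure {v | ∃ n : ℕ, v = shift^[n] w}) := by
  set Ow : Set (ℕ → Letter) := {v | ∃ n : ℕ, v = shift^[n] w} with hOw
  set Ou : Set (ℕ → Letter) := {v | ∃ n : ℕ, v = shift^[n] u} with hOu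
  have hXc : IsCompact (closure Ow) := isClosed_closure.isCompact
  have hF : IsCompact (act 2 S '' closure Ow) := hXc.image (continuous_act 2 S)
  have hclosed : IsClosed (act 2 S '' closure Ow ∪ shift '' (act 2 S '' closure Ow)) :=
    hF.isClosed.union (hF.image continuous_shift).isClosed
  apply Set.Subset.antisymm
  · apply closure_minimal _ hclosed
    rintro v ⟨n, rfl⟩
    have hn : n = 2 * (n / 2) + n % 2 := (Nat.div_add_mod n 2).symm
    have hmem : shift^[2 * (n / 2)] u ∈ act 2 S '' closure Ow := by
      refine ⟨shift^[n / 2] w, subset_closure ⟨n / 2, rfl⟩, ?_⟩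
      rw [act_shift_iter 2 (by norm_num), hu]
    rcases Nat.mod_two_eq_zero_or_one n with h | h
    · left
      rw [hn, h, Nat.add_zero]
      exact hmem
    · right
      rw [hn, h, Function.iterate_succ_apply']
      exact ⟨shift^[2 * (n / 2)] u, hmem, rfl⟩
  · have h1 : act 2 S '' closure Ow ⊆ closure Ou := by
      refine (image_closure_subset_closure_image (continuous_act 2 S)).trans
        (closure_mono ?_)
      rintro v ⟨x, ⟨n, rfl⟩, rfl⟩
      refine ⟨2 * n, ?_⟩
      rw [act_shift_iter 2 (by norm_num), hu]
    apply Set.union_subset h1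
    refine (Set.image_mono (f := shift) h1).trans ?_
    refine (image_closure_subset_closure_image continuous_shift).trans
      (closure_mono ?_)
    rintro v ⟨x, ⟨n, rfl⟩, rfl⟩
    exact ⟨n + 1, (Function.iterate_succ_apply' shift n u).symm⟩

lemma key_pm : ∀ a : Letter, ∀ s < 8,
    (Splusminus ((Splus a).getD (s / 4) Letter.A)).getD (s % 4) Letter.A =
    (Splus ((Sminusplus a).getD (s / 2) Letter.A)).getD (s % 2) Letter.A := by decide

lemma key_mp : ∀ a : Letter, ∀ s < 8,
    (Sminusplus ((Sminus a).getD (s / 4) Letter.A)).getD (s % 4) Letter.A =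
    (Sminus ((Splusminus a).getD (s / 2) Letter.A)).getD (s % 2) Letter.A := by decide

/-- The hulls of the fixed points of `S₋₊` and `S₊₋` satisfy
`X₊₋ = S₊·X₋₊ ∪ T(S₊·X₋₊)` and `X₋₊ = S₋·X₊₋ ∪ T(S₋·X₊₋)`. -/

theorem stmt12 (wmp wpm : ℕ → Letter)
    (h1 : wmp 0 = Letter.A) (h2 : wpm 0 = Letter.A)
    (h3 : act 4 Sminusplus wmp = wmp) (h4 : act 4 Splusminus wpm = wpm)
    (Xmp Xpm : Set (ℕ → Letter))
    (hXmp : Xmp = closure {v | ∃ n : ℕ, v = shift^[n] wmp})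
    (hXpm : Xpm = closure {v | ∃ n : ℕ, v = shift^[n] wpm}) :
    Xpm = (act 2 Splus) '' Xmp ∪ shift '' ((act 2 Splus) '' Xmp) ∧
    Xmp = (act 2 Sminus) '' Xpm ∪ shift '' ((act 2 Sminus) '' Xpm) := by

  have hpm : act 2 Splus wmp = wpm := by
    apply fix_unique Splusminus _ _ _ h4
    · simp [act, h1, h2, Splus]
    · rw [inter Splus Sminusplus Splusminus key_pm, h3]
  have hmp : act 2 Sminus wpm = wmp := by
    apply fix_unique Sminusplus _ _ _ h3
    · simp [act, h1, h2, Sminus]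
    · rw [inter Sminus Splusminus Sminusplus key_mp, h4]
  subst hXmp hXpm
  exact ⟨hull Splus wmp wpm hpm, hull Sminus wpm wmp hmp⟩
end

section
/- For every finite sequence of signs σ_0, …, σ_{k−1} ∈ {1, −1} and every letter a ∈ 𝒜, the word ABAB is not a contiguous subword of (S_{σ_0} ∘ S_{σ_1} ∘ ⋯ ∘ S_{σ_{k−1}})(a), where S_σ denotes S₊ if σ = 1 and S₋ if σ = −1. -/
lemma Ssign_eq (s : ℤ) : Ssign s = Splus ∨ Ssign s = Sminus := by
  unfold Ssign; split <;> simp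

lemma fx_pair (f : Letter → List Letter) (hf : f = Splus ∨ f = Sminus) (x : Letter) :
    ∃ c d, f x = [c, d] ∧ (c = .A ∨ c = .Abar) ∧ (d = .B ∨ d = .Bbar) := by
  rcases hf with rfl | rfl <;> cases x <;>
    first
    | exact ⟨_, _, rfl, .inl rfl, .inl rfl⟩
    | exact ⟨_, _, rfl, .inl rfl, .inr rfl⟩
    | exact ⟨_, _, rfl, .inr rfl, .inl rfl⟩
    | exact ⟨_, _, rfl, .inr rfl, .inr rfl⟩

lemma eq_of_AB (f : Letter → List Letter) (hf : f = Splus ∨ f = Sminus) (x y : Letter)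
    (hx : f x = [.A, .B]) (hy : f y = [.A, .B]) : x = y := by
  rcases hf with rfl | rfl <;> cases x <;> cases y <;> simp_all [Splus, Sminus]

lemma head_flatMap (f : Letter → List Letter) (hf : f = Splus ∨ f = Sminus)
    (t : List Letter) (z : Letter) (hz : (t.flatMap f).head? = some z) :
    z = .A ∨ z = .Abar := by
  cases t with
  | nil => simp at hz
  | cons y t' =>
      obtain ⟨c, d, hfy, hc, hd⟩ := fx_pair f hf y
      rw [List.flatMap_cons, hfy] at hz
      simp at hz
      exact hz ▸ hc

lemma chain_flatMap (f : Letter → List Letter) (hf : f = Splus ∨ f = Sminus) :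
    ∀ t : List Letter, List.Chain' (· ≠ ·) (t.flatMap f) := by
  intro t
  induction t with
  | nil => exact List.isChain_nil
  | cons y t' ih =>
      obtain ⟨c, d, hfy, hc, hd⟩ := fx_pair f hf y
      rw [List.flatMap_cons, hfy, List.Chain', List.isChain_append]
      refine ⟨?_, ih, ?_⟩
      · have : c ≠ d := by rcases hc with rfl | rfl <;> rcases hd with rfl | rfl <;> simp
        simp [this]
      · intro x hx z hz
        simp at hx
        subst hx
        have := head_flatMap f hf t' z hz
        rcases hd with rfl | rfl <;> rcases this with rfl | rfl <;> simp

lemma key (f : Letter → List Letter) (hf : f = Splus ∨ f = Sminus) :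
    ∀ w : List Letter, List.Chain' (· ≠ ·) w →
      ∀ u v : List Letter, u ++ [Letter.A, .B, .A, .B] ++ v ≠ w.flatMap f := by
  intro w
  induction w with
  | nil => intro _ u v h; simp at h
  | cons x t ih =>
      intro hch u v h
      obtain ⟨c, d, hfx, hc, hd⟩ := fx_pair f hf x
      rw [List.flatMap_cons, hfx] at h
      match u with
      | [] =>
          simp only [List.nil_append, List.cons_append, List.cons.injEq] at h
          obtain ⟨hcA, hdB, hrest⟩ := h
          cases t with
          | nil => simp at hrest
          | cons y t' =>
              obtain ⟨c', d', hfy, hc', hd'⟩ := fx_pair f hf y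
              rw [List.flatMap_cons, hfy] at hrest
              simp only [List.cons_append, List.cons.injEq] at hrest
              obtain ⟨hcA', hdB', _⟩ := hrest
              have hxy : x = y :=
                eq_of_AB f hf x y (by rw [hfx, hcA, hdB]) (by rw [hfy, ← hcA', ← hdB'])
              exact hch.rel_head hxy
      | [e] =>
          simp only [List.cons_append, List.nil_append, List.cons.injEq] at h
          obtain ⟨_, hdA, _⟩ := h
          rcases hd with rfl | rfl <;> simp at hdA
      | e1 :: e2 :: u' =>
          simp only [List.cons_append, List.cons.injEq] at h
          exact ih hch.tail u' v h.2.2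

lemma comp_succ (σ : ℕ → ℤ) (k : ℕ) :
    ∀ u, comp σ (k + 1) u = (comp (fun n => σ (n + 1)) k u).flatMap (Ssign (σ 0)) := by
  induction k with
  | zero => intro u; rfl
  | succ k ih =>
      intro u
      show comp σ (k + 1) (u.flatMap (Ssign (σ (k + 1)))) = _
      rw [ih]
      rfl

lemma chain_comp (σ : ℕ → ℤ) (k : ℕ) (a : Letter) :
    List.Chain' (· ≠ ·) (comp σ k [a]) := by
  cases k with
  | zero => exact List.isChain_singleton a
  | succ k =>
      rw [comp_succ]
      exact chain_flatMap _ (Ssign_eq _) _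

/-- The word `ABAB` is never a contiguous subword of
`(S_{σ_0} ∘ ⋯ ∘ S_{σ_{k-1}})(a)`, for any signs `σ_i ∈ {1, -1}` and any letter `a`. -/
theorem stmt13 (σ : ℕ → ℤ) (hσ : ∀ k, σ k = 1 ∨ σ k = -1) (k : ℕ) (a : Letter) :
    ¬ ([Letter.A, Letter.B, Letter.A, Letter.B] <:+: comp σ k [a]) := by
  cases k with
  | zero =>
      intro h
      have := h.length_le
      simp [comp] at this
  | succ k =>
      rw [comp_succ]
      rintro ⟨u, v, huv⟩
      exact key _ (Ssign_eq _) _ (chain_comp _ _ _) u v huv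
end
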